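/- Let G be a stratified group with layers 𝔤₁,…,𝔤_s, let γ : [a,b] → G be a curve, [s,s'] ⊆ [a,b] and Y ∈ 𝔤_j with 1 ≤ j < s. Then the endpoint displacement g := γ(b)⁻¹·γ(s)·exp(Y)·γ(s)⁻¹γ(s')·exp(−Y)·γ(s')⁻¹·γ(b) lies in G_{j+1} and π_{j+1}(g) = [Y, π(γ(s')) − π(γ(s))]. -/

import Mathlib

open Set Finset
set_option maxHeartbeats 1000000

/-- In a stratified group `G` (modelled as in the previous statements by a
group `G`, a stratified Lie algebra `L`, a bijective exponential `e : L ≃ G` with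
`e(X)⁻¹ = e(-X)`, `Ad(e X) = e^{ad X}`, and BCH with quantitative remainder), for a curve
`γ : [a,b] → G`, a subinterval `[σ,σ'] ⊆ [a,b]` and `Y ∈ 𝔤_j` with `1 ≤ j < s`, the
endpoint displacement
`d := γ(b)⁻¹·γ(σ)·e(Y)·γ(σ)⁻¹·γ(σ')·e(Y)⁻¹·γ(σ')⁻¹·γ(b)` lies in `G_{j+1} = e(𝔴_{j+1})`
and `π_{j+1}(d) = ⁅Y, π(γ(σ')) − π(γ(σ))⁆`. -/
theorem stmt_12 (L : Type*) [LieRing L] [LieAlgebra ℝ L]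
    (s : ℕ) (g : ℕ → Submodule ℝ L)
    (hbr : ∀ i j, ∀ x ∈ g i, ∀ y ∈ g j, ⁅x, y⁆ ∈ g (i + j))
    (h0 : g 0 = ⊥) (htop : ∀ k, s < k → g k = ⊥)
    (hint : DirectSum.IsInternal g)
    (G : Type*) [Group G] (e : L ≃ G)
    (hinv : ∀ X : L, (e X)⁻¹ = e (-X))
    (R : L → L → L)
    (hmul : ∀ X Y : L, e X * e Y = e (X + Y + R X Y))
    (hR : ∀ i i' : ℕ, ∀ X Y : L, X ∈ ⨆ l ∈ Set.Ici i, g l → Y ∈ ⨆ l ∈ Set.Ici i', g l →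
      R X Y - (2 : ℝ)⁻¹ • ⁅X, Y⁆ ∈ ⨆ l ∈ Set.Ici (i + i' + min i i'), g l)
    (hconj : ∀ X Y : L, e X * e Y * (e X)⁻¹ =
      e (∑ k ∈ Finset.range (s + 1), ((k.factorial : ℝ)⁻¹) • ((LieAlgebra.ad ℝ L X ^ k) Y)))
    (j : ℕ) (hj1 : 1 ≤ j) (hjs : j < s)
    (p1 : L →ₗ[ℝ] L) (hp1 : ∀ x ∈ g 1, p1 x = x) (hp1' : ∀ i, i ≠ 1 → ∀ x ∈ g i, p1 x = 0)
    (pj1 : L →ₗ[ℝ] L) (hpj1 : ∀ x ∈ g (j + 1), pj1 x = x)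
    (hpj1' : ∀ i, i ≠ j + 1 → ∀ x ∈ g i, pj1 x = 0)
    (γ : ℝ → G) (a b σ σ' : ℝ) (haσ : a ≤ σ) (hσσ : σ ≤ σ') (hσb : σ' ≤ b)
    (Y : L) (hY : Y ∈ g j) :
    e.symm ((γ b)⁻¹ * (γ σ * e Y * ((γ σ)⁻¹ * γ σ') * (e Y)⁻¹ * ((γ σ')⁻¹ * γ b)))
        ∈ ⨆ l ∈ Set.Ici (j + 1), g l ∧
      pj1 (e.symm ((γ b)⁻¹ * (γ σ * e Y * ((γ σ)⁻¹ * γ σ') * (e Y)⁻¹ * ((γ σ')⁻¹ * γ b))))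
        = ⁅Y, p1 (e.symm (γ σ')) - p1 (e.symm (γ σ))⁆ := by
  classical
  -- local name for the "tail" filtration
  obtain ⟨W, hWdef⟩ : ∃ W : ℕ → Submodule ℝ L, W = fun i => ⨆ l ∈ Set.Ici i, g l := ⟨_, rfl⟩
  have hWmem' : ∀ i l (x : L), x ∈ g l → i ≤ l → x ∈ ⨆ l ∈ Set.Ici i, g l := by
    intro i l x hx hil
    exact Submodule.mem_iSup_of_mem l (Submodule.mem_iSup_of_mem hil hx)
  have hWiff : ∀ i (x : L), x ∈ W i ↔ x ∈ ⨆ l ∈ Set.Ici i, g l := by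
    rw [hWdef]; exact fun _ _ => Iff.rfl
  have hWmem : ∀ i l (x : L), x ∈ g l → i ≤ l → x ∈ W i := by
    rw [hWdef]; exact hWmem'
  have hWle : ∀ {i i' : ℕ}, i ≤ i' → W i' ≤ W i := by
    intro i i' h
    rw [hWdef]
    exact iSup₂_le fun l hl => le_iSup₂_of_le l (le_trans h hl) le_rfl
  have htop' : (⨆ i, g i) = ⊤ := hint.submodule_iSup_eq_top
  have hW1top : ∀ x : L, x ∈ W 1 := by
    intro x
    rw [hWdef]
    show x ∈ ⨆ l ∈ Set.Ici 1, g l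
    have h1 : (⨆ i, g i) ≤ ⨆ l ∈ Set.Ici 1, g l := by
      refine iSup_le fun i => ?_
      rcases Nat.eq_zero_or_pos i with h | h
      · rw [h, h0]; exact bot_le
      · exact le_iSup₂_of_le i h le_rfl
    exact h1 (htop' ▸ Submodule.mem_top)
  have hbrW : ∀ i i' (X X' : L), X ∈ W i → X' ∈ W i' → ⁅X, X'⁆ ∈ W (i + i') := by
    rw [hWdef]
    intro i i' X X' hX hX'
    have step1 : ∀ l (x : L), i ≤ l → x ∈ g l → ⁅x, X'⁆ ∈ ⨆ l ∈ Set.Ici (i + i'), g l := by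
      intro l x hl hx
      have h2 : (⨆ l ∈ Set.Ici i', g l) ≤
          Submodule.comap (LieAlgebra.ad ℝ L x) (⨆ l ∈ Set.Ici (i + i'), g l) := by
        refine iSup₂_le fun m hm => ?_
        intro y hy
        simp only [Submodule.mem_comap, LieAlgebra.ad_apply]
        exact hWmem' _ _ _ (hbr l m x hx y hy) (add_le_add hl hm)
      simpa using h2 hX'
    have h1 : (⨆ l ∈ Set.Ici i, g l) ≤
        Submodule.comap ((LieAlgebra.ad ℝ L : L →ₗ[ℝ] Module.End ℝ L).flip X')
          (⨆ l ∈ Set.Ici (i + i'), g l) := by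
      refine iSup₂_le fun l hl => ?_
      intro x hx
      simp only [Submodule.mem_comap, LinearMap.flip_apply, LieHom.coe_toLinearMap,
        LieAlgebra.ad_apply]
      exact step1 l x hl hx
    simpa using h1 hX
  have hker : ∀ m, j + 2 ≤ m → ∀ x ∈ W m, pj1 x = 0 := by
    rw [hWdef]
    intro m hm x hx
    have h1 : (⨆ l ∈ Set.Ici m, g l) ≤ LinearMap.ker pj1 := by
      refine iSup₂_le fun l hl => ?_
      intro y hy
      have hl' : m ≤ l := hl
      simp only [LinearMap.mem_ker]
      exact hpj1' l (by omega) y hy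
    exact LinearMap.mem_ker.mp (h1 hx)
  have hp1mem : ∀ x : L, p1 x ∈ g 1 := by
    intro x
    have h1 : (⨆ i, g i) ≤ Submodule.comap p1 (g 1) := by
      refine iSup_le fun i => ?_
      intro y hy
      simp only [Submodule.mem_comap]
      by_cases h : i = 1
      · subst h; rw [hp1 y hy]; exact hy
      · rw [hp1' i h y hy]; exact Submodule.zero_mem _
    exact h1 (htop' ▸ Submodule.mem_top) 
  have hp1decomp : ∀ x : L, x - p1 x ∈ W 2 := by
    rw [hWdef]
    intro x
    have h1 : (⨆ i, g i) ≤ Submodule.comap (LinearMap.id - p1) (⨆ l ∈ Set.Ici 2, g l) := by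
      refine iSup_le fun i => ?_
      intro y hy
      simp only [Submodule.mem_comap, LinearMap.sub_apply, LinearMap.id_apply]
      match i, hy with
      | 0, hy => 
        rw [h0] at hy
        simp only [Submodule.mem_bot] at hy
        subst hy
        simp only [map_zero, sub_zero]
        exact Submodule.zero_mem _
      | 1, hy =>
        rw [hp1 y hy, sub_self]
        exact Submodule.zero_mem _
      | (n + 2), hy =>
        rw [hp1' (n + 2) (by omega) y hy, sub_zero]
        exact hWmem' 2 (n + 2) y hy (by omega)
    have := h1 (htop' ▸ Submodule.mem_top : x ∈ ⨆ i, g i)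
    simpa using this
  have hpow : ∀ (X : L) m (V : L), V ∈ W m → ∀ k,
      ((LieAlgebra.ad ℝ L X ^ k) V) ∈ W (m + k) := by
    intro X m V hV k
    induction k with
    | zero => simpa using hV
    | succ n ih =>
      have h3 := hbrW 1 (m + n) X _ (hW1top X) ih
      have h4 : (1 + (m + n)) = m + (n + 1) := by omega
      rw [h4] at h3
      simpa [pow_succ', Module.End.mul_apply, LieAlgebra.ad_apply] using h3
  have hconjsum : ∀ (X : L) m (V : L), V ∈ W m →
      ∃ T ∈ W (m + 2),
        (∑ k ∈ Finset.range (s + 1), ((k.factorial : ℝ)⁻¹) • ((LieAlgebra.ad ℝ L X ^ k) V))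
          = V + ⁅X, V⁆ + T := by
    intro X m V hV
    refine ⟨∑ k ∈ Finset.Ico 2 (s + 1), ((k.factorial : ℝ)⁻¹) • ((LieAlgebra.ad ℝ L X ^ k) V),
      ?_, ?_⟩
    · refine Submodule.sum_mem _ fun k hk => Submodule.smul_mem _ _ ?_
      have hk2 : 2 ≤ k := (Finset.mem_Ico.mp hk).1
      exact hWle (by omega) (hpow X m V hV k)
    · rw [Finset.range_eq_Ico,
        ← Finset.sum_Ico_consecutive _ (by omega : (0:ℕ) ≤ 2) (by omega : 2 ≤ s + 1)]
      have h01 : Finset.Ico 0 2 = ({0, 1} : Finset ℕ) := by decide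
      rw [h01]
      simp [Finset.sum_insert, Finset.sum_singleton, Nat.factorial, LieAlgebra.ad_apply]
  have hpj1br : ∀ (X V : L), V ∈ g j → pj1 ⁅X, V⁆ = ⁅p1 X, V⁆ := by
    intro X V hV
    have h2 : ⁅X, V⁆ = ⁅p1 X, V⁆ + ⁅X - p1 X, V⁆ := by
      rw [← add_lie]
      congr 1
      abel
    rw [h2, map_add]
    have hb2 : ⁅X - p1 X, V⁆ ∈ W (2 + j) :=
      hbrW 2 j _ _ (hp1decomp X) (hWmem j j V hV le_rfl)
    rw [hker (2 + j) (by omega) _ hb2, add_zero]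
    have h3 : ⁅p1 X, V⁆ ∈ g (j + 1) := by
      have := hbr 1 j (p1 X) (hp1mem X) V hV
      rwa [Nat.add_comm] at this
    exact hpj1 _ h3
  -- names for the relevant Lie algebra elements
  obtain ⟨av, hav⟩ : ∃ x : L, x = e.symm (γ σ) := ⟨_, rfl⟩
  obtain ⟨bv, hbv⟩ : ∃ x : L, x = e.symm (γ σ') := ⟨_, rfl⟩
  obtain ⟨cv, hcv⟩ : ∃ x : L, x = e.symm (γ b) := ⟨_, rfl⟩
  obtain ⟨SA, hSAdef⟩ : ∃ x : L, x = ∑ k ∈ Finset.range (s + 1),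
    ((k.factorial : ℝ)⁻¹) • ((LieAlgebra.ad ℝ L av ^ k) Y) := ⟨_, rfl⟩
  obtain ⟨SB, hSBdef⟩ : ∃ x : L, x = ∑ k ∈ Finset.range (s + 1),
    ((k.factorial : ℝ)⁻¹) • ((LieAlgebra.ad ℝ L bv ^ k) (-Y)) := ⟨_, rfl⟩
  obtain ⟨U, hUdef⟩ : ∃ x : L, x = SA + SB + R SA SB := ⟨_, rfl⟩
  obtain ⟨V, hVdef⟩ : ∃ x : L, x = ∑ k ∈ Finset.range (s + 1),
    ((k.factorial : ℝ)⁻¹) • ((LieAlgebra.ad ℝ L (-cv) ^ k) U) := ⟨_, rfl⟩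
  have hea : γ σ = e av := by rw [hav, e.apply_symm_apply]
  have heb : γ σ' = e bv := by rw [hbv, e.apply_symm_apply]
  have hec : γ b = e cv := by rw [hcv, e.apply_symm_apply]
  have hd : (γ b)⁻¹ * (γ σ * e Y * ((γ σ)⁻¹ * γ σ') * (e Y)⁻¹ * ((γ σ')⁻¹ * γ b)) = e V := by
    have h1 : γ σ * e Y * (γ σ)⁻¹ = e SA := by
      rw [hea, hSAdef]; exact hconj av Y
    have h2 : γ σ' * (e Y)⁻¹ * (γ σ')⁻¹ = e SB := by
      rw [heb, hinv Y, hSBdef]; exact hconj bv (-Y)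
    have hC : (γ b)⁻¹ = e (-cv) := by rw [hec, hinv]
    have hCb : γ b = (e (-cv))⁻¹ := by rw [hinv, neg_neg, hec]
    calc (γ b)⁻¹ * (γ σ * e Y * ((γ σ)⁻¹ * γ σ') * (e Y)⁻¹ * ((γ σ')⁻¹ * γ b))
        = (γ b)⁻¹ * ((γ σ * e Y * (γ σ)⁻¹) * (γ σ' * (e Y)⁻¹ * (γ σ')⁻¹)) * γ b := by group
      _ = e (-cv) * (e SA * e SB) * (e (-cv))⁻¹ := by rw [h1, h2, hC, hCb]
      _ = e (-cv) * e U * (e (-cv))⁻¹ := by rw [hmul, ← hUdef]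
      _ = e V := by rw [hVdef]; exact hconj (-cv) U
  have hd' : e.symm ((γ b)⁻¹ * (γ σ * e Y * ((γ σ)⁻¹ * γ σ') * (e Y)⁻¹ * ((γ σ')⁻¹ * γ b)))
      = V := by rw [hd, e.symm_apply_apply]
  -- algebraic properties
  have hYW : Y ∈ W j := hWmem j j Y hY le_rfl
  have hnYW : -Y ∈ W j := Submodule.neg_mem _ hYW
  obtain ⟨TA, hTA, hSAeq⟩ := hconjsum av j Y hYW
  obtain ⟨TB, hTB, hSBeq⟩ := hconjsum bv j (-Y) hnYW
  obtain ⟨ZA, hZAdef⟩ : ∃ x : L, x = ⁅av, Y⁆ + TA := ⟨_, rfl⟩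
  obtain ⟨ZB, hZBdef⟩ : ∃ x : L, x = ⁅bv, -Y⁆ + TB := ⟨_, rfl⟩
  have hSA' : SA = Y + ZA := by rw [hSAdef, hSAeq, hZAdef]; abel
  have hSB' : SB = -Y + ZB := by rw [hSBdef, hSBeq, hZBdef]; abel
  have hZAW : ZA ∈ W (j + 1) := by
    rw [hZAdef]
    refine Submodule.add_mem _ ?_ (hWle (by omega) hTA)
    have := hbrW 1 j av Y (hW1top av) hYW
    exact hWle (by omega) this
  have hZBW : ZB ∈ W (j + 1) := by
    rw [hZBdef]
    refine Submodule.add_mem _ ?_ (hWle (by omega) hTB)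
    have := hbrW 1 j bv (-Y) (hW1top bv) hnYW
    exact hWle (by omega) this
  have hSAW : SA ∈ W j := by
    rw [hSA']; exact Submodule.add_mem _ hYW (hWle (by omega) hZAW)
  have hSBW : SB ∈ W j := by
    rw [hSB']; exact Submodule.add_mem _ hnYW (hWle (by omega) hZBW)
  have hbrAB : ⁅SA, SB⁆ ∈ W (j + 2) := by
    have e1 : ⁅SA, SB⁆ = ⁅Y, ZB⁆ + (⁅ZA, -Y⁆ + ⁅ZA, ZB⁆) := by
      rw [hSA', hSB']
      simp only [lie_add, add_lie, lie_neg, lie_self, neg_zero, zero_add]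
      abel
    rw [e1]
    refine Submodule.add_mem _ ?_ (Submodule.add_mem _ ?_ ?_)
    · exact hWle (by omega) (hbrW j (j + 1) Y ZB hYW hZBW)
    · exact hWle (by omega) (hbrW (j + 1) j ZA (-Y) hZAW hnYW)
    · exact hWle (by omega) (hbrW (j + 1) (j + 1) ZA ZB hZAW hZBW)
  have hRmem : R SA SB ∈ W (j + 2) := by
    have h1' := hR j j SA SB ((hWiff _ _).mp hSAW) ((hWiff _ _).mp hSBW)
    rw [min_self] at h1'
    have h1 := (hWiff _ _).mpr h1'
    have h2 : R SA SB = (R SA SB - (2 : ℝ)⁻¹ • ⁅SA, SB⁆) + (2 : ℝ)⁻¹ • ⁅SA, SB⁆ := by abel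
    rw [h2]
    exact Submodule.add_mem _ (hWle (by omega) h1) (Submodule.smul_mem _ _ hbrAB)
  have hU' : U = ZA + ZB + R SA SB := by
    rw [hUdef, hSA', hSB']; abel
  have hUW : U ∈ W (j + 1) := by
    rw [hU']
    exact Submodule.add_mem _ (Submodule.add_mem _ hZAW hZBW) (hWle (by omega) hRmem)
  have hpj1ZA : pj1 ZA = ⁅p1 av, Y⁆ := by
    rw [hZAdef]
    rw [ map_add, hpj1br av Y hY, hker (j + 2) le_rfl TA hTA, add_zero]
  have hpj1ZB : pj1 ZB = -⁅p1 bv, Y⁆ := by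
    rw [hZBdef]
    rw [ map_add, hpj1br bv (-Y) (Submodule.neg_mem _ hY),
      hker (j + 2) le_rfl TB hTB, add_zero, lie_neg]
  have hpj1U : pj1 U = ⁅p1 av, Y⁆ - ⁅p1 bv, Y⁆ := by
    rw [hU', map_add, map_add, hker (j + 2) le_rfl _ hRmem, add_zero, hpj1ZA, hpj1ZB]
    abel
  obtain ⟨TC, hTC, hVeq⟩ := hconjsum (-cv) (j + 1) U hUW
  have hbrcU : ⁅-cv, U⁆ ∈ W (j + 2) := by
    have := hbrW 1 (j + 1) (-cv) U (hW1top (-cv)) hUW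
    exact hWle (by omega) this
  have hVW : V ∈ W (j + 1) := by
    rw [hVdef, hVeq]
    exact Submodule.add_mem _ (Submodule.add_mem _ hUW (hWle (by omega) hbrcU))
      (hWle (by omega) hTC)
  have hpj1V : pj1 V = pj1 U := by
    rw [hVdef, hVeq, map_add, map_add, hker (j + 2) le_rfl _ hbrcU,
      hker (j + 1 + 2) (by omega) _ hTC, add_zero, add_zero]
  constructor
  · have h := hVW
    rw [hWdef] at h
    rw [hd']
    exact h
  · rw [hd', hpj1V, hpj1U, ← hav, ← hbv]
    rw [lie_sub, ← lie_skew Y (p1 bv), ← lie_skew Y (p1 av)]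
    abel
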